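/- Let T ≥ 1, C_t : ℝ → ℝ convex for each t, and let S, S* ∈ ℝ^{T+1} agree at times 0 and T. If μ* ∈ ℝ^T satisfies that x_t(S*) minimises C_t(x) − μ*_t x for each t, then ∑_{t=1}^T C_t(x_t(S*)) − ∑_{t=1}^T C_t(x_t(S)) ≤ ∑_{t=1}^{T−1} (S*_t − S_t)(μ*_t − μ*_{t+1}). -/

import Mathlib

lemma abel_aux (μ a : ℕ → ℝ) (ha0 : a 0 = 0) (n : ℕ) :
    ∑ t ∈ Finset.Icc 1 (n+1), μ t * (a t - a (t-1)) =
      ∑ t ∈ Finset.Icc 1 n, a t * (μ t - μ (t+1)) + μ (n+1) * a (n+1) := by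
  induction n with
  | zero => simp [ha0]
  | succ n ih =>
    rw [Finset.sum_Icc_succ_top (by omega : 1 ≤ n+1+1), ih,
        Finset.sum_Icc_succ_top (by omega : 1 ≤ n+1)]
    simp only [Nat.add_sub_cancel]
    ring

/-- Summation-by-parts inequality used in the Lagrangian sufficiency proof. -/
theorem summation_by_parts_bound
    (T : ℕ) (hT : 1 ≤ T)
    (C : ℕ → ℝ → ℝ)
    (hconv : ∀ t, 1 ≤ t → t ≤ T → ConvexOn ℝ Set.univ (C t))
    (S Sstar μstar : ℕ → ℝ)
    (hS0 : S 0 = Sstar 0) (hST : S T = Sstar T)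
    (hmin : ∀ t, 1 ≤ t → t ≤ T → ∀ x : ℝ,
      C t (Sstar t - Sstar (t - 1)) - μstar t * (Sstar t - Sstar (t - 1)) ≤
        C t x - μstar t * x) :
    ∑ t ∈ Finset.Icc 1 T, C t (Sstar t - Sstar (t - 1)) -
        ∑ t ∈ Finset.Icc 1 T, C t (S t - S (t - 1)) ≤
      ∑ t ∈ Finset.Icc 1 (T - 1), (Sstar t - S t) * (μstar t - μstar (t + 1)) := by
  set a : ℕ → ℝ := fun t => Sstar t - S t with ha
  have ha0 : a 0 = 0 := by simp [ha, hS0]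
  have haT : a T = 0 := by simp [ha, hST]
  have h1 : ∑ t ∈ Finset.Icc 1 T, C t (Sstar t - Sstar (t - 1)) -
      ∑ t ∈ Finset.Icc 1 T, C t (S t - S (t - 1)) ≤
      ∑ t ∈ Finset.Icc 1 T, μstar t * (a t - a (t-1)) := by
    rw [← Finset.sum_sub_distrib]
    apply Finset.sum_le_sum
    intro t ht
    simp only [Finset.mem_Icc] at ht
    have h := hmin t ht.1 ht.2 (S t - S (t-1))
    simp only [ha]
    nlinarith [h]
  refine h1.trans_eq ?_
  obtain ⟨n, rfl⟩ : ∃ n, T = n + 1 := ⟨T - 1, by omega⟩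
  rw [abel_aux μstar a ha0 n, haT, Nat.add_sub_cancel]
  ring
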